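/- If gcd(r, 60) = 1, then F_r mod 10 is a unit modulo 10, i.e., F_r mod 10 ∈ {1, 3, 7, 9}. -/

import Mathlib

lemma fib_add_60_mod (n : ℕ) : Nat.fib (n + 60) % 10 = Nat.fib n % 10 := by
  have h := Nat.fib_add n 59
  have e : n + 59 + 1 = n + 60 := by ring
  rw [e] at h
  have h60 : Nat.fib (59 + 1) % 10 = 0 := by norm_num
  have h59 : Nat.fib 59 % 10 = 1 := by norm_num
  rw [h, Nat.add_mod, Nat.mul_mod, Nat.mul_mod (Nat.fib (n + 1)), h59, h60]
  simp [Nat.mod_mod]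

lemma fib_period (k n : ℕ) : Nat.fib (n + 60 * k) % 10 = Nat.fib n % 10 := by
  induction k with
  | zero => rfl
  | succ k ih =>
    have e : n + 60 * (k + 1) = (n + 60 * k) + 60 := by ring
    rw [e, fib_add_60_mod, ih]

theorem fib_mod_ten_unit (r : ℕ) (h : Nat.gcd r 60 = 1) :
    Nat.fib r % 10 ∈ ({1, 3, 7, 9} : Set ℕ) := by
  have hr : r = r % 60 + 60 * (r / 60) := by omega
  rw [hr, fib_period]
  have hg : Nat.gcd (r % 60) 60 = 1 := by
    rwa [Nat.gcd_comm, Nat.gcd_rec] at h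
  have hlt : r % 60 < 60 := Nat.mod_lt _ (by norm_num)
  simp only [Set.mem_insert_iff, Set.mem_singleton_iff]
  interval_cases h : r % 60 <;> norm_num at hg <;> norm_num
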